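/- Every left Noetherian domain is a left Ore domain: if R is a domain (a nontrivial ring with no zero divisors) that is left Noetherian, then for all nonzero a, b ∈ R one has Ra ∩ Rb ≠ 0. -/
import Mathlib

/-- Every left Noetherian domain is a left Ore domain: if `R` is a nontrivial ring
with no zero divisors which is left Noetherian, then for all nonzero `a b : R`
the left ideals `Ra` and `Rb` intersect nontrivially. -/
theorem stmt_2 (R : Type*) [Ring R] [Nontrivial R] [NoZeroDivisors R]
    [IsNoetherianRing R] (a b : R) (ha : a ≠ 0) (hb : b ≠ 0) :
    Submodule.span R ({a} : Set R) ⊓ Submodule.span R ({b} : Set R) ≠ ⊥ := by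
  intro hbot
  -- right multiplication by b, as a left-linear map
  set φ : R →ₗ[R] R := LinearMap.toSpanSingleton R R b with hφ
  have hφ_apply : ∀ x : R, φ x = x * b := fun x => rfl
  have hφ_inj : ∀ x : R, φ x = 0 → x = 0 := by
    intro x hx
    rw [hφ_apply] at hx
    rcases mul_eq_zero.mp hx with h | h
    · exact h
    · exact absurd h hb
  -- the chain g n = Ra + Rab + ... + Rab^{n-1}
  set g : ℕ → Submodule R R :=
    fun n => Nat.rec ⊥ (fun _ ih => Submodule.span R ({a} : Set R) ⊔ Submodule.map φ ih) n
    with hg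
  have hg0 : g 0 = ⊥ := rfl
  have hgs : ∀ n, g (n + 1) = Submodule.span R ({a} : Set R) ⊔ Submodule.map φ (g n) :=
    fun n => rfl
  have hmono : Monotone g := by
    apply monotone_nat_of_le_succ
    intro n
    induction n with
    | zero => simp [hg0]
    | succ n ih =>
      rw [hgs n, hgs (n + 1)]
      exact sup_le_sup le_rfl (Submodule.map_mono ih)
  -- a * b^n ∈ g (n+1)
  have hmem : ∀ n, a * b ^ n ∈ g (n + 1) := by
    intro n
    induction n with
    | zero =>
      rw [hgs 0]
      refine Submodule.mem_sup_left ?_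
      simpa using Submodule.mem_span_singleton_self a
    | succ n ih =>
      rw [hgs (n + 1)]
      refine Submodule.mem_sup_right ?_
      refine Submodule.mem_map.mpr ⟨a * b ^ n, ih, ?_⟩
      rw [hφ_apply, mul_assoc, pow_succ]
  -- independence: span {a * b^n} ⊓ g n = ⊥
  have hindep : ∀ n, Submodule.span R ({a * b ^ n} : Set R) ⊓ g n = ⊥ := by
    intro n
    induction n with
    | zero => simp [hg0]
    | succ n ih =>
      rw [eq_bot_iff]
      rintro x ⟨hx1, hx2⟩
      rw [hgs n] at hx2
      rcases Submodule.mem_span_singleton.mp hx1 with ⟨r, hr⟩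
      rcases Submodule.mem_sup.mp hx2 with ⟨s, hs, t, ht, hst⟩
      rcases Submodule.mem_span_singleton.mp hs with ⟨u, hu⟩
      rcases Submodule.mem_map.mp ht with ⟨y, hy, hyt⟩
      -- x = r • (a * b^(n+1)) = u • a + y * b
      have hx' : x = u * a + y * b := by
        rw [← hst, ← hu, ← hyt, hφ_apply, smul_eq_mul]
      have hrx : r * (a * b ^ (n + 1)) = u * a + y * b := by
        rw [← hx', ← hr, smul_eq_mul]
      have h1 : r * (a * b ^ n) * b = r * (a * b ^ (n + 1)) := by
        rw [mul_assoc, mul_assoc, ← pow_succ]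
      have key : u * a = (r * (a * b ^ n) - y) * b := by
        rw [sub_mul, h1, hrx]
        abel
      have hua_mem : u * a ∈ Submodule.span R ({a} : Set R) ⊓ Submodule.span R ({b} : Set R) := by
        constructor
        · exact Submodule.mem_span_singleton.mpr ⟨u, rfl⟩
        · rw [key]
          exact Submodule.mem_span_singleton.mpr ⟨_, rfl⟩
      rw [hbot, Submodule.mem_bot] at hua_mem
      have hsub : (r * (a * b ^ n) - y) * b = 0 := by rw [← key, hua_mem]
      have hsub0 : r * (a * b ^ n) - y = 0 := by
        rcases mul_eq_zero.mp hsub with h | h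
        · exact h
        · exact absurd h hb
      have hry : r * (a * b ^ n) = y := sub_eq_zero.mp hsub0
      have hrab : r * (a * b ^ n) ∈ Submodule.span R ({a * b ^ n} : Set R) ⊓ g n :=
        ⟨Submodule.mem_span_singleton.mpr ⟨r, rfl⟩, hry ▸ hy⟩
      rw [ih, Submodule.mem_bot] at hrab
      have : x = 0 := by
        rw [← hr, smul_eq_mul, pow_succ, ← mul_assoc a, ← mul_assoc, hrab, zero_mul]
      simp [this]
  -- Noetherian: the chain stabilizes
  obtain ⟨n, hn⟩ := monotone_stabilizes_iff_noetherian.mpr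
    (inferInstance : IsNoetherian R R) ⟨g, hmono⟩
  have habn : a * b ^ n ∈ g n := by
    have h2 : g n = g (n + 1) := hn (n + 1) (Nat.le_succ n)
    rw [h2]
    exact hmem n
  have : a * b ^ n ∈ Submodule.span R ({a * b ^ n} : Set R) ⊓ g n :=
    ⟨Submodule.mem_span_singleton_self _, habn⟩
  rw [hindep n, Submodule.mem_bot] at this
  rcases mul_eq_zero.mp this with h | h
  · exact ha h
  · exact hb (pow_eq_zero_iff'.mp h).1
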